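/- Let (σ,δ) be a left skew derivation of a ring A with σ an automorphism. Then Σ = {1, X, X^2, ...} is a right denominator set of A[X;σ,δ] if and only if δ' = -δσ^{-1} is locally nilpotent. -/

import Mathlib

/-- Let `(σ, δ)` be a left skew derivation of a ring `A` with `σ` an
automorphism.  In the skew polynomial ring `A[X;σ,δ]` (modeled as a ring `R`
with `ι : A →+* R`, `X : R`, the relation `X·a = σ(a)·X + δ(a)` and `{X^i}` a
left `A`-basis), the set `Σ = {1, X, X², …}` is a right denominator set (right
permutable and right reversible) if and only if `δ' = -δ∘σ⁻¹` is locally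
nilpotent. -/
theorem stmt5 {A R : Type*} [Ring A] [Ring R]
    (σ : A ≃+* A) (δ : A →+ A)
    (hleib : ∀ a b : A, δ (a * b) = σ a * δ b + δ a * b)
    (ι : A →+* R) (X : R)
    (hcomm : ∀ a : A, X * ι a = ι (σ a) * X + ι (δ a))
    (hbasis : ∀ f : R, ∃! c : ℕ →₀ A, f = c.sum fun i a => ι a * X ^ i) :
    ((∀ (f : R) (m : ℕ), ∃ (g : R) (n : ℕ), f * X ^ n = X ^ m * g) ∧
     (∀ (f : R) (m : ℕ), X ^ m * f = 0 → ∃ n : ℕ, f * X ^ n = 0)) ↔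
    (∀ a : A, ∃ k : ℕ, (fun b => -δ (σ.symm b))^[k] a = 0) := by
  classical
  -- commutation rule in the other direction
  have hcomm' : ∀ a : A, ι a * X = X * ι (σ.symm a) + ι (-δ (σ.symm a)) := by
    intro a
    have h := hcomm (σ.symm a)
    rw [σ.apply_symm_apply] at h
    rw [h, map_neg]
    abel
  -- uniqueness of the decomposition f = ι b + X * g
  have uniq : ∀ (b : A) (g : R), ι b + X * g = 0 → b = 0 ∧ g = 0 := by
    intro b g h
    obtain ⟨c, hc, -⟩ := hbasis g
    set d : ℕ →₀ A := Finsupp.single 0 b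
        + Finsupp.mapDomain Nat.succ (c.mapRange (⇑σ) (map_zero σ))
        + c.mapRange (⇑δ) (map_zero δ) with hdDef
    have hsum : ι b + X * g = d.sum (fun i a => ι a * X ^ i) := by
      rw [hdDef, Finsupp.sum_add_index' (by intro i; simp)
            (by intro i a b; rw [map_add, add_mul]),
          Finsupp.sum_add_index' (by intro i; simp)
            (by intro i a b; rw [map_add, add_mul]),
          Finsupp.sum_single_index (by simp),
          Finsupp.sum_mapDomain_index (by intro i; simp)
            (by intro i a b; rw [map_add, add_mul]),
          Finsupp.sum_mapRange_index (by intro i; simp),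
          Finsupp.sum_mapRange_index (by intro i; simp)]
      rw [hc, Finsupp.mul_sum]
      have : (c.sum fun i a => X * (ι a * X ^ i))
          = c.sum fun i a => ι (σ a) * X ^ (i + 1) + ι (δ a) * X ^ i := by
        apply Finsupp.sum_congr
        intro i _
        rw [← mul_assoc, hcomm, add_mul, mul_assoc, ← pow_succ']
      rw [this, Finsupp.sum_add]
      simp [pow_succ]
      abel
    obtain ⟨c0, hc0, hu0⟩ := hbasis (0 : R)
    have hd0' : d = c0 := hu0 d (by
      show (0 : R) = d.sum fun i a => ι a * X ^ i
      rw [← hsum, h])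
    have hz : (0 : ℕ →₀ A) = c0 := hu0 0 (by
      show (0 : R) = Finsupp.sum 0 fun i a => ι a * X ^ i
      rw [Finsupp.sum_zero_index])
    have hd : d = 0 := hd0'.trans hz.symm
    have hd1 : ∀ j : ℕ, σ (c j) + δ (c (j + 1)) = 0 := by
      intro j
      have := DFunLike.congr_fun hd (j + 1)
      simpa [hdDef, Finsupp.single_apply,
        Finsupp.mapDomain_apply Nat.succ_injective] using this
    have hd00 : b + δ (c 0) = 0 := by
      have := DFunLike.congr_fun hd 0
      have h0 : Finsupp.mapDomain Nat.succ (c.mapRange (⇑σ) (map_zero σ)) 0 = 0 :=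
        Finsupp.mapDomain_notin_range _ _ (by simp [Set.range, Nat.succ_ne_zero])
      simpa [hdDef, h0] using this
    have hstep : ∀ j : ℕ, c (j + 1) = 0 → c j = 0 := by
      intro j hj
      have := hd1 j
      rw [hj, map_zero, add_zero] at this
      exact σ.injective (by rw [this, map_zero])
    obtain ⟨N, hN⟩ := Finset.exists_nat_subset_range c.support
    have czero0 : ∀ j, N ≤ j → c j = 0 := by
      intro j hj
      by_contra hne
      exact absurd (Finset.mem_range.mp (hN (Finsupp.mem_support_iff.mpr hne))) (by omega)
    have key : ∀ i j, N ≤ j + i → c j = 0 := by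
      intro i
      induction i with
      | zero => intro j hj; exact czero0 j (by omega)
      | succ i ih => intro j hj; exact hstep j (ih (j + 1) (by omega))
    have call : ∀ j, c j = 0 := fun j => key N j (by omega)
    have cz : c = 0 := Finsupp.ext call
    constructor
    · have := hd00
      rw [call 0, map_zero, add_zero] at this
      exact this
    · rw [hc, cz, Finsupp.sum_zero_index]
  -- existence of the decomposition
  have keydec : ∀ (i : ℕ) (a : A), ∃ b g, ι a * X ^ i = ι b + X * g := by
    intro i
    induction i with
    | zero => exact fun a => ⟨a, 0, by simp⟩
    | succ i ih =>
      intro a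
      obtain ⟨b, g, hbg⟩ := ih (-δ (σ.symm a))
      refine ⟨b, ι (σ.symm a) * X ^ i + g, ?_⟩
      rw [pow_succ', ← mul_assoc, hcomm' a, add_mul, mul_assoc, hbg, mul_add,
        ← mul_assoc]
      abel
  have hdec : ∀ f : R, ∃ b g, f = ι b + X * g := by
    intro f
    obtain ⟨c, hc, -⟩ := hbasis f
    rw [hc]; clear hc
    induction c using Finsupp.induction with
    | zero => exact ⟨0, 0, by simp⟩
    | single_add i a c hia ha ih =>
      obtain ⟨b, g, hbg⟩ := ih
      obtain ⟨b', g', hbg'⟩ := keydec i a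
      refine ⟨b' + b, g' + g, ?_⟩
      rw [Finsupp.sum_add_index' (by intro i; simp)
            (by intro i a b; rw [map_add, add_mul]),
          Finsupp.sum_single_index (by simp), hbg, hbg', map_add, mul_add]
      abel
  choose B G hBG using hdec
  have hBspec : ∀ (b : A) (g : R), B (ι b + X * g) = b := by
    intro b g
    have h1 := hBG (ι b + X * g)
    have h2 : ι (b - B (ι b + X * g)) + X * (g - G (ι b + X * g)) = 0 := by
      rw [map_sub, mul_sub]
      rw [sub_add_sub_comm, sub_eq_zero]
      exact h1
    have := (uniq _ _ h2).1
    exact (sub_eq_zero.mp this).symm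
  have hBi : ∀ a : A, B (ι a) = a := by
    intro a
    have : ι a = ι a + X * 0 := by rw [mul_zero, add_zero]
    rw [this, hBspec]
  have hBX : ∀ f : R, B (f * X) = -δ (σ.symm (B f)) := by
    intro f
    have e : f * X = ι (-δ (σ.symm (B f))) + X * (ι (σ.symm (B f)) + G f * X) := by
      conv_lhs => rw [hBG f]
      rw [add_mul, hcomm' (B f), mul_assoc, mul_add]
      abel
    rw [e, hBspec]
  have hBXn : ∀ (f : R) (n : ℕ), B (f * X ^ n) = (fun b => -δ (σ.symm b))^[n] (B f) := by
    intro f n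
    induction n with
    | zero => simp
    | succ n ih =>
      rw [pow_succ, ← mul_assoc, hBX, ih, Function.iterate_succ_apply']
  have hXreg : ∀ f : R, X * f = 0 → f = 0 := by
    intro f hf
    have : ι (0 : A) + X * f = 0 := by rw [map_zero, zero_add, hf]
    exact (uniq _ _ this).2
  constructor
  · rintro ⟨h1, -⟩ a
    obtain ⟨g, n, hg⟩ := h1 (ι a) 1
    rw [pow_one] at hg
    refine ⟨n, ?_⟩
    have := hBXn (ι a) n
    rw [hg, hBi] at this
    rw [← this]
    have : X * g = ι (0 : A) + X * g := by rw [map_zero, zero_add]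
    rw [this, hBspec]
  · intro hnil
    have ore1 : ∀ f : R, ∃ g n, f * X ^ n = X * g := by
      intro f
      obtain ⟨k, hk⟩ := hnil (B f)
      refine ⟨G (f * X ^ k), k, ?_⟩
      have h1 := hBG (f * X ^ k)
      rw [hBXn, hk, map_zero, zero_add] at h1
      exact h1
    constructor
    · intro f m
      induction m generalizing f with
      | zero => exact ⟨f, 0, by rw [pow_zero, one_mul, mul_one]⟩
      | succ m ih =>
        obtain ⟨g, n, hg⟩ := ih f
        obtain ⟨g', k, hg'⟩ := ore1 g
        refine ⟨g', n + k, ?_⟩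
        rw [pow_add, ← mul_assoc, hg, mul_assoc, hg', pow_succ, mul_assoc]
    · intro f m hf
      refine ⟨0, ?_⟩
      rw [pow_zero, mul_one]
      induction m with
      | zero => rw [pow_zero, one_mul] at hf; exact hf
      | succ m ih =>
        apply ih
        apply hXreg
        rw [← mul_assoc, ← pow_succ']
        exact hf
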